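/- The number of edges of the Fibonacci cube Γ_n equals (nF_{n+1} + 2(n+1)F_n)/5, where F_k denotes the Fibonacci numbers. -/

import Mathlib

open Finset

/-- Number of positions where two binary strings differ. -/
def diffCount {n : ℕ} (u v : Fin n → Bool) : ℕ :=
  (Finset.univ.filter fun i => u i ≠ v i).card

/-- Fibonacci strings: binary strings with no two consecutive 1's. -/
def FibPred (n : ℕ) (v : Fin n → Bool) : Prop :=
  ∀ i j : Fin n, (j : ℕ) = (i : ℕ) + 1 → ¬(v i = true ∧ v j = true)

instance (n : ℕ) : DecidablePred (FibPred n) := fun v => by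
  unfold FibPred; infer_instance

/-- Vertices of the Fibonacci cube: Fibonacci strings of length n. -/
def FibV (n : ℕ) := {v : Fin n → Bool // FibPred n v}

instance (n : ℕ) : Fintype (FibV n) := Subtype.fintype _
instance (n : ℕ) : DecidableEq (FibV n) := Subtype.instDecidableEq

/-- The Fibonacci cube Γ_n: Fibonacci strings adjacent iff they differ in exactly one position. -/
def fibCube (n : ℕ) : SimpleGraph (FibV n) where
  Adj u v := diffCount u.1 v.1 = 1
  symm := by
    constructor
    intro u v h
    have he : (Finset.univ.filter fun i => v.1 i ≠ u.1 i)
        = (Finset.univ.filter fun i => u.1 i ≠ v.1 i) := by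
      apply Finset.filter_congr; intro i _; exact ne_comm
    simpa [diffCount, he] using h
  loopless := by constructor; intro u h; simp [diffCount] at h

instance (n : ℕ) : DecidableRel (fibCube n).Adj := fun u v => Nat.decEq _ _


lemma fibPred_iff {n : ℕ} (v : Fin n → Bool) :
    FibPred n v ↔ ∀ k : ℕ, (h : k + 1 < n) →
      ¬(v ⟨k, by omega⟩ = true ∧ v ⟨k+1, h⟩ = true) := by
  constructor
  · intro H k h
    exact H ⟨k, by omega⟩ ⟨k+1, h⟩ rfl
  · intro H i j hij
    obtain ⟨k, hk⟩ := i
    have hij' : (j : ℕ) = k + 1 := hij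
    have hi : k + 1 < n := by
      have := j.2; omega
    have hj : j = ⟨k+1, hi⟩ := by ext; exact hij'
    rw [hj]
    exact H k hi

lemma snoc_mk_lt {n : ℕ} (v : Fin n → Bool) (b : Bool) {k : ℕ} (h : k < n) (hk : k < n+1) :
    (Fin.snoc v b : Fin (n+1) → Bool) ⟨k, hk⟩ = v ⟨k, h⟩ := by
  have : (⟨k, hk⟩ : Fin (n+1)) = Fin.castSucc ⟨k, h⟩ := rfl
  rw [this, Fin.snoc_castSucc]

lemma snoc_mk_self {n : ℕ} (v : Fin n → Bool) (b : Bool) (hk : n < n+1) :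
    (Fin.snoc v b : Fin (n+1) → Bool) ⟨n, hk⟩ = b := by
  have : (⟨n, hk⟩ : Fin (n+1)) = Fin.last n := rfl
  rw [this, Fin.snoc_last]

lemma fibPred_snoc_false {n : ℕ} (v : Fin n → Bool) :
    FibPred (n+1) (Fin.snoc v false) ↔ FibPred n v := by
  rw [fibPred_iff, fibPred_iff]
  constructor
  · intro H k h
    have := H k (by omega)
    rwa [snoc_mk_lt (k := k) v false (by omega), snoc_mk_lt (k := k+1) v false (by omega)] at this
  · intro H k h
    rcases Nat.lt_or_ge (k+1) n with h' | h'
    · have := H k h'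
      rw [snoc_mk_lt (k := k) v false (by omega), snoc_mk_lt (k := k+1) v false (by omega)]
      exact this
    · have hk1 : k + 1 = n := by omega
      subst hk1
      rw [snoc_mk_self]
      simp

lemma fibPred_snoc01 {n : ℕ} (v : Fin n → Bool) :
    FibPred (n+2) (Fin.snoc (Fin.snoc v false) true) ↔ FibPred n v := by
  rw [fibPred_iff, fibPred_iff]
  constructor
  · intro H k h
    have := H k (by omega)
    rwa [snoc_mk_lt (k := k) _ true (by omega), snoc_mk_lt (k := k+1) _ true (by omega),
      snoc_mk_lt (k := k) v false (by omega), snoc_mk_lt (k := k+1) v false (by omega)] at this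
  · intro H k h
    rcases Nat.lt_or_ge (k+1) n with h' | h'
    · have := H k h'
      rw [snoc_mk_lt (k := k) _ true (by omega), snoc_mk_lt (k := k+1) _ true (by omega),
        snoc_mk_lt (k := k) v false (by omega), snoc_mk_lt (k := k+1) v false (by omega)]
      exact this
    · rcases Nat.lt_or_ge (k+1) (n+1) with h'' | h''
      · have hk1 : k + 1 = n := by omega
        subst hk1
        rw [snoc_mk_lt (k := k) _ true (by omega), snoc_mk_lt (k := k+1) _ true (by omega),
          snoc_mk_self]
        simp
      · have hk : k = n := by omega
        subst hk
        rw [snoc_mk_lt (k := k) _ true (by omega), snoc_mk_self, snoc_mk_self]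
        simp

def ones {n : ℕ} (v : Fin n → Bool) : ℕ := (univ.filter fun i => v i = true).card

lemma ones_eq_sum {n : ℕ} (v : Fin n → Bool) :
    ones v = ∑ i : Fin n, (if v i = true then 1 else 0) := Finset.card_filter _ _

lemma ones_snoc {n : ℕ} (v : Fin n → Bool) (b : Bool) :
    ones (Fin.snoc v b) = ones v + (if b = true then 1 else 0) := by
  rw [ones_eq_sum, ones_eq_sum, Fin.sum_univ_castSucc]
  simp [Fin.snoc_castSucc, Fin.snoc_last]

lemma snoc_inj {n : ℕ} (b : Bool) :
    Function.Injective (fun v : Fin n → Bool => (Fin.snoc v b : Fin (n+1) → Bool)) := by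
  intro u v h
  funext i
  have := congrFun h (Fin.castSucc i)
  simpa [Fin.snoc_castSucc] using this

def Fs (n : ℕ) : Finset (Fin n → Bool) := univ.filter (FibPred n)

lemma Fs_split (n : ℕ) :
    Fs (n+2) = ((Fs (n+1)).image (fun v => Fin.snoc v false)) ∪
      ((Fs n).image (fun v => Fin.snoc (Fin.snoc v false) true)) := by
  ext w
  simp only [Fs, Finset.mem_union, Finset.mem_image, Finset.mem_filter, Finset.mem_univ,
    true_and]
  constructor
  · intro hw
    by_cases hl : w (Fin.last (n+1)) = true
    · -- last bit true, so bit n is false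
      right
      have hn : w (Fin.castSucc (Fin.last n)) = false := by
        have := hw (Fin.castSucc (Fin.last n)) (Fin.last (n+1)) (by simp)
        rcases Bool.eq_false_or_eq_true (w (Fin.castSucc (Fin.last n))) with h | h
        · exact absurd ⟨h, hl⟩ this
        · exact h
      refine ⟨Fin.init (Fin.init w), ?_, ?_⟩
      · have hw2 : w = Fin.snoc (Fin.snoc (Fin.init (Fin.init w)) false) true := by
          rw [← hn]
          have : Fin.snoc (Fin.init (Fin.init w)) (Fin.init w (Fin.last n)) = Fin.init w :=
            Fin.snoc_init_self _
          have hiw : Fin.init w (Fin.last n) = w (Fin.castSucc (Fin.last n)) := rfl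
          rw [← hiw, this, ← hl, Fin.snoc_init_self]
        rw [hw2] at hw
        exact (fibPred_snoc01 _).mp hw
      · rw [← hn]
        have hiw : Fin.init w (Fin.last n) = w (Fin.castSucc (Fin.last n)) := rfl
        rw [← hiw, Fin.snoc_init_self, ← hl, Fin.snoc_init_self]
    · left
      have hl' : w (Fin.last (n+1)) = false := by
        rcases Bool.eq_false_or_eq_true (w (Fin.last (n+1))) with h | h
        · exact absurd h hl
        · exact h
      refine ⟨Fin.init w, ?_, ?_⟩
      · have hw2 : w = Fin.snoc (Fin.init w) false := by
          rw [← hl', Fin.snoc_init_self]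
        rw [hw2] at hw
        exact (fibPred_snoc_false _).mp hw
      · rw [← hl', Fin.snoc_init_self]
  · rintro (⟨v, hv, rfl⟩ | ⟨v, hv, rfl⟩)
    · exact (fibPred_snoc_false _).mpr hv
    · exact (fibPred_snoc01 _).mpr hv

lemma Fs_disj (n : ℕ) :
    Disjoint ((Fs (n+1)).image (fun v => Fin.snoc v false) : Finset (Fin (n+2) → Bool))
      ((Fs n).image (fun v => Fin.snoc (Fin.snoc v false) true)) := by
  rw [Finset.disjoint_left]
  rintro w hw1 hw2
  simp only [Finset.mem_image] at hw1 hw2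
  obtain ⟨u, _, rfl⟩ := hw1
  obtain ⟨v, _, hv⟩ := hw2
  have := congrFun hv (Fin.last (n+1))
  simp [Fin.snoc_last] at this

def Vc (n : ℕ) : ℕ := (Fs n).card
def T (n : ℕ) : ℕ := ∑ v ∈ Fs n, ones v

lemma snoc01_inj {n : ℕ} :
    Function.Injective (fun v : Fin n → Bool =>
      (Fin.snoc (Fin.snoc v false) true : Fin (n+2) → Bool)) :=
  fun _ _ h => snoc_inj false (snoc_inj true h)

lemma Vc_rec (n : ℕ) : Vc (n+2) = Vc (n+1) + Vc n := by
  unfold Vc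
  rw [Fs_split n, Finset.card_union_of_disjoint (Fs_disj n),
    Finset.card_image_of_injective _ (snoc_inj false),
    Finset.card_image_of_injective _ snoc01_inj]

lemma Vc_zero : Vc 0 = 1 := by decide
lemma Vc_one : Vc 1 = 2 := by decide
lemma T_zero : T 0 = 0 := by decide
lemma T_one : T 1 = 1 := by decide

lemma Vc_eq (n : ℕ) : Vc n = Nat.fib (n+2) := by
  induction n using Nat.twoStepInduction with
  | zero => simpa using Vc_zero
  | one => exact Vc_one.trans (by decide)
  | more n ih1 ih2 =>
    rw [Vc_rec, ih1, ih2, Nat.fib_add_two (n := n+2)]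
    ring

lemma T_rec (n : ℕ) : T (n+2) = T (n+1) + T n + Vc n := by
  unfold T Vc
  rw [Fs_split n, Finset.sum_union (Fs_disj n),
    Finset.sum_image (fun a _ b _ h => snoc_inj false h),
    Finset.sum_image (fun a _ b _ h => snoc01_inj h)]
  simp [ones_snoc, Finset.sum_add_distrib]
  omega

lemma five_T (n : ℕ) : 5 * T n = n * Nat.fib (n+1) + 2 * (n+1) * Nat.fib n := by
  induction n using Nat.twoStepInduction with
  | zero => simp [T_zero]
  | one => simp [T_one, Nat.fib_one, Nat.fib_two]
  | more n ih1 ih2 =>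
    have h1 : 5 * T (n+2) = 5 * T (n+1) + 5 * T n + 5 * Vc n := by
      rw [T_rec]; ring
    rw [h1, ih1, ih2, Vc_eq, Nat.fib_add_two (n := n+1), Nat.fib_add_two (n := n)]
    ring


lemma fibPred_update_false {n : ℕ} {v : Fin n → Bool} (hv : FibPred n v) (i : Fin n) :
    FibPred n (Function.update v i false) := by
  intro a b hab h
  obtain ⟨h1, h2⟩ := h
  by_cases ha : a = i
  · subst ha; simp at h1
  · by_cases hb : b = i
    · subst hb; simp at h2
    · rw [Function.update_of_ne ha] at h1
      rw [Function.update_of_ne hb] at h2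
      exact hv a b hab ⟨h1, h2⟩

def other {n : ℕ} (w : FibV n) (i : Fin n) : FibV n :=
  ⟨Function.update w.1 i false, fibPred_update_false w.2 i⟩

lemma diffCount_update {n : ℕ} {w : Fin n → Bool} {i : Fin n} (h : w i = true) :
    diffCount w (Function.update w i false) = 1 := by
  unfold diffCount
  have : (Finset.univ.filter fun j => w j ≠ Function.update w i false j) = {i} := by
    ext j
    simp only [Finset.mem_filter, Finset.mem_univ, true_and, Finset.mem_singleton,
      Function.update_apply]
    by_cases hj : j = i <;> simp [hj, h]
  rw [this, Finset.card_singleton]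

lemma adj_other {n : ℕ} (w : FibV n) (i : Fin n) (h : w.1 i = true) :
    (fibCube n).Adj w (other w i) := diffCount_update h

lemma card_edges_eq_T (n : ℕ) :
    (fibCube n).edgeFinset.card
      = (Finset.univ.filter fun p : FibV n × Fin n => p.1.1 p.2 = true).card := by
  symm
  apply Finset.card_bij (fun p _ => s(p.1, other p.1 p.2))
  · -- maps into edgeFinset
    intro p hp
    simp only [Finset.mem_filter] at hp
    rw [SimpleGraph.mem_edgeFinset, SimpleGraph.mem_edgeSet]
    exact adj_other p.1 p.2 hp.2
  · -- injective
    intro p hp q hq heq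
    simp only [Finset.mem_filter, Finset.mem_univ, true_and] at hp hq
    rw [Sym2.mk_eq_mk_iff (p := (p.1, other p.1 p.2)) (q := (q.1, other q.1 q.2))] at heq
    rcases heq with h | h
    · -- (p.1, other p) = (q.1, other q)
      rw [Prod.ext_iff] at h
      obtain ⟨h1, h2⟩ := h
      have h3 : p.2 = q.2 := by
        by_contra hne
        have hh := congrFun (congrArg Subtype.val h2) p.2
        simp only [other] at hh
        rw [Function.update_self, Function.update_apply, if_neg hne] at hh
        rw [← h1, hp] at hh
        exact Bool.false_ne_true hh
      exact Prod.ext h1 h3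
    · -- swapped case: contradiction
      exfalso
      rw [Prod.swap_prod_mk] at h
      injection h with h1 h2
      -- p.1 q.2 = false
      have e1 : p.1.1 q.2 = false := by
        rw [h1]; simp [other]
      -- q.1 = update p.1 p.2 false, and q.1 q.2 = true
      have e2 : q.1.1 q.2 = true := hq
      rw [← h2] at e2
      simp only [other, Function.update_apply] at e2
      by_cases hqp : q.2 = p.2
      · rw [if_pos hqp] at e2; exact Bool.false_ne_true e2
      · rw [if_neg hqp] at e2
        rw [e1] at e2; exact Bool.false_ne_true e2
  · -- surjective
    intro e he
    induction e with
    | h u v =>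
      rw [SimpleGraph.mem_edgeFinset, SimpleGraph.mem_edgeSet] at he
      have hd : diffCount u.1 v.1 = 1 := he
      unfold diffCount at hd
      obtain ⟨i, hi⟩ := Finset.card_eq_one.mp hd
      have hmem : ∀ j : Fin n, (u.1 j ≠ v.1 j) ↔ j = i := by
        intro j
        constructor
        · intro hj
          have : j ∈ (Finset.univ.filter fun k => u.1 k ≠ v.1 k) := by
            simp [hj]
          rw [hi] at this; simpa using this
        · intro hj
          subst hj
          have : j ∈ (Finset.univ.filter fun k => u.1 k ≠ v.1 k) := by
            rw [hi]; simp
          simpa using this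
      have hne : u.1 i ≠ v.1 i := (hmem i).mpr rfl
      have heq : ∀ j : Fin n, j ≠ i → u.1 j = v.1 j := by
        intro j hj
        by_contra hc
        exact hj ((hmem j).mp hc)
      by_cases hu : u.1 i = true
      · refine ⟨(u, i), by simp [hu], ?_⟩
        have : other u i = v := by
          apply Subtype.ext
          funext j
          by_cases hj : j = i
          · subst hj
            simp only [other, Function.update_self]
            rcases Bool.eq_false_or_eq_true (v.1 j) with h | h
            · rw [hu] at hne; exact absurd h.symm hne
            · exact h.symm
          · simp only [other, Function.update_of_ne hj]
            exact heq j hj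
        rw [this]
      · have hu' : u.1 i = false := Bool.eq_false_iff.mpr hu
        have hv : v.1 i = true := by
          rcases Bool.eq_false_or_eq_true (v.1 i) with h | h
          · exact h
          · rw [hu', h] at hne; exact absurd rfl hne
        refine ⟨(v, i), by simp [hv], ?_⟩
        have : other v i = u := by
          apply Subtype.ext
          funext j
          by_cases hj : j = i
          · subst hj
            simp only [other, Function.update_self]
            exact hu'.symm
          · simp only [other, Function.update_of_ne hj]
            exact (heq j hj).symm
        rw [this, Sym2.eq_swap]

/-- The number of edges of the Fibonacci cube Γ_n equals (nF_{n+1} + 2(n+1)F_n)/5. -/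
theorem card_edges_fibCube (n : ℕ) :
    (fibCube n).edgeFinset.card =
      (n * Nat.fib (n + 1) + 2 * (n + 1) * Nat.fib n) / 5 := by
  have hT : (fibCube n).edgeFinset.card = T n := by
    rw [card_edges_eq_T, Finset.card_filter, Fintype.sum_prod_type]
    have h2 : ∀ w : FibV n, (∑ i : Fin n, if w.1 i = true then (1:ℕ) else 0) = ones w.1 :=
      fun w => (ones_eq_sum _).symm
    rw [Finset.sum_congr rfl fun w _ => h2 w]
    unfold T Fs
    rw [Finset.sum_subtype (p := FibPred n) (Finset.univ.filter (FibPred n))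
      (fun x => by simp) (fun v => ones v)]
    rfl
  have h5 := five_T n
  omega
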